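/- Let Ω = (0,1)×(0,1) with variables (s,r), let K_∥ > 0, γ ≥ 0, Δt > 0, ν > 0. Let T^n, T^⋆ : [0,1]×[0,1] → ℝ be twice continuously differentiable, with T^n nonnegative, satisfying for all (s,r) ∈ Ω: (T^⋆ − T^n)/Δt − ∂_s[(K_∥ (T^n)^{5/2} − ν) ∂_s T^n] − ν ∂_{ss} T^⋆ = 0, with boundary conditions: for r ∈ (1/2,1), (K_∥ (T^n(0,r))^{5/2} − ν)∂_sT^n(0,r) = γ T^⋆(0,r) − ν∂_sT^⋆(0,r) and (K_∥ (T^n(1,r))^{5/2} − ν)∂_sT^n(1,r) = −γ T^⋆(1,r) − ν∂_sT^⋆(1,r); and for r ∈ (0,1/2), periodicity in s: T^n(0,r)=T^n(1,r), ∂_sT^n(0,r)=∂_sT^n(1,r), T^⋆(0,r)=T^⋆(1,r), ∂_sT^⋆(0,r)=∂_sT^⋆(1,r). If K_∥ · (sup_Ω T^n)^{5/2} ≤ ν, then (1/2)∫_Ω (T^⋆)² dr ds + (νΔt/2)∫_Ω |∂_s T^⋆|² dr ds ≤ (1/2)∫_Ω (T^n)² dr ds + (νΔt/2)∫_Ω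 |∂_s T^n|² dr ds. -/

import Mathlib

open Set MeasureTheory intervalIntegral

lemma key_1d (K γ Δt ν : ℝ) (hK : 0 < K) (hγ : 0 ≤ γ) (hΔt : 0 < Δt) (hν : 0 < ν)
    (u v : ℝ → ℝ) (hu : ContDiff ℝ 2 u) (hv : ContDiff ℝ 2 v)
    (hub : ∀ s ∈ Icc (0:ℝ) 1, 0 ≤ u s ∧ K * u s ^ ((5:ℝ)/2) ≤ ν)
    (hpde : ∀ s ∈ Ioo (0:ℝ) 1,
      (v s - u s)/Δt - deriv (fun x => (K * u x ^ ((5:ℝ)/2) - ν) * deriv u x) s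
        - ν * deriv (deriv v) s = 0)
    (hbd : ((K * u 0 ^ ((5:ℝ)/2) - ν) * deriv u 0 = γ * v 0 - ν * deriv v 0
         ∧ (K * u 1 ^ ((5:ℝ)/2) - ν) * deriv u 1 = -(γ * v 1) - ν * deriv v 1)
       ∨ (u 0 = u 1 ∧ deriv u 0 = deriv u 1 ∧ v 0 = v 1 ∧ deriv v 0 = deriv v 1)) :
    (1/2) * (∫ s in (0:ℝ)..1, (v s)^2) + (ν*Δt/2) * (∫ s in (0:ℝ)..1, (deriv v s)^2)
    ≤ (1/2) * (∫ s in (0:ℝ)..1, (u s)^2) + (ν*Δt/2) * (∫ s in (0:ℝ)..1, (deriv u s)^2) := by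
  -- basic differentiability facts
  have hu2 : ContDiff ℝ (1+1) u := by exact_mod_cast hu
  have hv2 : ContDiff ℝ (1+1) v := by exact_mod_cast hv
  have hud : Differentiable ℝ u := hu.differentiable (by norm_num)
  have hvd : Differentiable ℝ v := hv.differentiable (by norm_num)
  have hu1 : ContDiff ℝ 1 (deriv u) := (contDiff_succ_iff_deriv.mp hu2).2.2
  have hv1 : ContDiff ℝ 1 (deriv v) := (contDiff_succ_iff_deriv.mp hv2).2.2
  have hu'd : Differentiable ℝ (deriv u) := hu1.differentiable (by norm_num)
  have hv'd : Differentiable ℝ (deriv v) := hv1.differentiable (by norm_num)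
  have hu'c : Continuous (deriv u) := hu1.continuous
  have hv'c : Continuous (deriv v) := hv1.continuous
  have hu''c : Continuous (deriv (deriv u)) := hu1.continuous_deriv le_rfl
  have hv''c : Continuous (deriv (deriv v)) := hv1.continuous_deriv le_rfl
  set a : ℝ → ℝ := fun s => K * u s ^ ((5:ℝ)/2) - ν with ha_def
  set w : ℝ → ℝ := fun s => a s * deriv u s with hw_def
  set w' : ℝ → ℝ := fun s =>
      (K * (((5:ℝ)/2) * u s ^ ((5:ℝ)/2 - 1) * deriv u s)) * deriv u s
        + a s * deriv (deriv u) s with hw'_def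
  have haD : ∀ x, HasDerivAt a (K * (((5:ℝ)/2) * u x ^ ((5:ℝ)/2 - 1) * deriv u x)) x := by
    intro x
    have h1 : HasDerivAt (fun y : ℝ => y ^ ((5:ℝ)/2))
        (((5:ℝ)/2) * u x ^ ((5:ℝ)/2 - 1)) (u x) :=
      Real.hasDerivAt_rpow_const (Or.inr (by norm_num))
    have h2 : HasDerivAt (fun y => u y ^ ((5:ℝ)/2))
        (((5:ℝ)/2) * u x ^ ((5:ℝ)/2 - 1) * deriv u x) x :=
      h1.comp x (hud x).hasDerivAt
    exact (h2.const_mul K).sub_const ν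
  have hwD : ∀ x, HasDerivAt w (w' x) x := fun x => (haD x).mul (hu'd x).hasDerivAt
  have hac : Continuous a :=
    (continuous_const.mul ((Real.continuous_rpow_const (by norm_num)).comp hu.continuous)).sub
      continuous_const
  have hwc : Continuous w := hac.mul hu'c
  have hw'c : Continuous w' := by
    apply Continuous.add
    · exact (continuous_const.mul ((continuous_const.mul
        ((Real.continuous_rpow_const (by norm_num)).comp hu.continuous)).mul hu'c)).mul hu'c
    · exact hac.mul hu''c
  -- integration by parts
  have IBP1 : ∫ s in (0:ℝ)..1, v s * w' s
      = v 1 * w 1 - v 0 * w 0 - ∫ s in (0:ℝ)..1, deriv v s * w s :=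
    integral_mul_deriv_eq_deriv_mul (fun x _ => (hvd x).hasDerivAt) (fun x _ => hwD x)
      (hv'c.intervalIntegrable 0 1) (hw'c.intervalIntegrable 0 1)
  have IBP2 : ∫ s in (0:ℝ)..1, v s * deriv (deriv v) s
      = v 1 * deriv v 1 - v 0 * deriv v 0 - ∫ s in (0:ℝ)..1, deriv v s * deriv v s :=
    integral_mul_deriv_eq_deriv_mul (fun x _ => (hvd x).hasDerivAt)
      (fun x _ => (hv'd x).hasDerivAt)
      (hv'c.intervalIntegrable 0 1) (hv''c.intervalIntegrable 0 1)
  -- PDE identity extended to the closed interval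
  have heq : EqOn (fun s => (v s * (v s - u s))/Δt)
      (fun s => v s * w' s + ν * (v s * deriv (deriv v) s)) (Icc (0:ℝ) 1) := by
    have hopen : EqOn (fun s => (v s * (v s - u s))/Δt)
        (fun s => v s * w' s + ν * (v s * deriv (deriv v) s)) (Ioo (0:ℝ) 1) := by
      intro s hs
      have h := hpde s hs
      have hds : deriv w s = w' s := (hwD s).deriv
      have h' : (v s - u s)/Δt = w' s + ν * deriv (deriv v) s := by
        rw [← hds]; linarith
      simp only
      rw [div_eq_iff hΔt.ne'] at h' ⊢
      linear_combination (v s) * h'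
    have h1 : Continuous (fun s => (v s * (v s - u s))/Δt) :=
      ((hv.continuous.mul (hv.continuous.sub hu.continuous)).div_const Δt)
    have h2 : Continuous (fun s => v s * w' s + ν * (v s * deriv (deriv v) s)) :=
      (hv.continuous.mul hw'c).add (continuous_const.mul (hv.continuous.mul hv''c))
    have := hopen.closure h1 h2
    rwa [closure_Ioo (by norm_num : (0:ℝ) ≠ 1)] at this
  have hI1 : ∫ s in (0:ℝ)..1, (v s * (v s - u s))/Δt
      = (∫ s in (0:ℝ)..1, v s * w' s) + ν * ∫ s in (0:ℝ)..1, v s * deriv (deriv v) s := by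
    rw [intervalIntegral.integral_congr (g := fun s => v s * w' s + ν * (v s * deriv (deriv v) s))
      (by rwa [uIcc_of_le (by norm_num : (0:ℝ) ≤ 1)])]
    rw [intervalIntegral.integral_add (f := fun s => v s * w' s)
      (g := fun s => ν * (v s * deriv (deriv v) s)) ((hv.continuous.mul hw'c).intervalIntegrable 0 1)
      ((continuous_const.mul (hv.continuous.mul hv''c)).intervalIntegrable 0 1),
      intervalIntegral.integral_const_mul]
  -- boundary term
  set B : ℝ := v 1 * w 1 - v 0 * w 0 + ν * (v 1 * deriv v 1 - v 0 * deriv v 0) with hB_def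
  have hB : B ≤ 0 := by
    rcases hbd with ⟨h0, h1⟩ | ⟨e1, e2, e3, e4⟩
    · have hw0 : w 0 = γ * v 0 - ν * deriv v 0 := h0
      have hw1 : w 1 = -(γ * v 1) - ν * deriv v 1 := h1
      rw [hB_def, hw0, hw1]
      nlinarith [sq_nonneg (v 0), sq_nonneg (v 1)]
    · have hw01 : w 0 = w 1 := by
        simp only [hw_def, ha_def, e1, e2]
      rw [hB_def, hw01, e3, e4]
      ring_nf
      exact le_refl 0
  -- pointwise inequalities
  have pt1 : ∀ x ∈ Icc (0:ℝ) 1,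
      (fun s => (1/2) * (v s)^2 - (1/2) * (u s)^2) x ≤ (fun s => v s * (v s - u s)) x := by
    intro x _
    simp only
    nlinarith [sq_nonneg (v x - u x)]
  have pt2 : ∀ x ∈ Icc (0:ℝ) 1,
      (fun s => -(deriv v s * w s)) x
        ≤ (fun s => ν/2 * ((deriv u s)^2 + (deriv v s)^2)) x := by
    intro x hx
    obtain ⟨h0u, hKu⟩ := hub x hx
    have hK5 : 0 ≤ K * u x ^ ((5:ℝ)/2) := mul_nonneg hK.le (Real.rpow_nonneg h0u _)
    simp only [hw_def, ha_def]
    nlinarith [mul_nonneg (show (0:ℝ) ≤ ν - K * u x ^ ((5:ℝ)/2) by linarith)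
        (sq_nonneg (deriv u x - deriv v x)),
      mul_nonneg hK5 (by positivity : (0:ℝ) ≤ (deriv u x)^2 + (deriv v x)^2)]
  -- integral inequalities
  have hP : (1/2) * (∫ s in (0:ℝ)..1, (v s)^2) - (1/2) * (∫ s in (0:ℝ)..1, (u s)^2)
      ≤ ∫ s in (0:ℝ)..1, v s * (v s - u s) := by
    have := intervalIntegral.integral_mono_on (μ := volume)
      (f := fun s => (1/2) * (v s)^2 - (1/2) * (u s)^2) (g := fun s => v s * (v s - u s))
      (by norm_num : (0:ℝ) ≤ 1)
      (((continuous_const.mul (hv.continuous.pow 2)).sub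
        (continuous_const.mul (hu.continuous.pow 2))).intervalIntegrable 0 1)
      ((hv.continuous.mul (hv.continuous.sub hu.continuous)).intervalIntegrable 0 1) pt1
    rwa [intervalIntegral.integral_sub (f := fun s => (1/2) * (v s)^2)
        (g := fun s => (1/2) * (u s)^2)
        ((continuous_const.mul (hv.continuous.pow 2)).intervalIntegrable 0 1)
        ((continuous_const.mul (hu.continuous.pow 2)).intervalIntegrable 0 1),
      intervalIntegral.integral_const_mul, intervalIntegral.integral_const_mul] at this
  have hX : -(∫ s in (0:ℝ)..1, deriv v s * w s)
      ≤ ν/2 * (∫ s in (0:ℝ)..1, (deriv u s)^2) + ν/2 * (∫ s in (0:ℝ)..1, (deriv v s)^2) := by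
    have := intervalIntegral.integral_mono_on (μ := volume)
      (f := fun s => -(deriv v s * w s)) (g := fun s => ν/2 * ((deriv u s)^2 + (deriv v s)^2))
      (by norm_num : (0:ℝ) ≤ 1)
      (((hv'c.mul hwc).neg).intervalIntegrable 0 1)
      ((continuous_const.mul ((hu'c.pow 2).add (hv'c.pow 2))).intervalIntegrable 0 1) pt2
    rwa [intervalIntegral.integral_neg, intervalIntegral.integral_const_mul,
      intervalIntegral.integral_add (f := fun s => (deriv u s)^2) (g := fun s => (deriv v s)^2)
        ((hu'c.pow 2).intervalIntegrable 0 1)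
        ((hv'c.pow 2).intervalIntegrable 0 1), mul_add] at this
  -- assemble
  have hdiv : ∫ s in (0:ℝ)..1, v s * (v s - u s) / Δt
      = (∫ s in (0:ℝ)..1, v s * (v s - u s)) / Δt := by
    simp_rw [div_eq_mul_inv]
    rw [intervalIntegral.integral_mul_const]
  have hJv : ∫ s in (0:ℝ)..1, deriv v s * deriv v s
      = ∫ s in (0:ℝ)..1, (deriv v s)^2 := by
    congr 1; funext s; ring
  have hmain : ∫ s in (0:ℝ)..1, v s * (v s - u s)
      = Δt * (B - (∫ s in (0:ℝ)..1, deriv v s * w s)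
          - ν * ∫ s in (0:ℝ)..1, (deriv v s)^2) := by
    have h := hI1
    rw [hdiv, IBP1, IBP2, hJv] at h
    field_simp at h
    rw [hB_def]
    linarith [h]
  have hΔB : Δt * B ≤ 0 := mul_nonpos_of_nonneg_of_nonpos hΔt.le hB
  nlinarith [hP, hX, hmain, mul_le_mul_of_nonneg_left hX hΔt.le]

lemma swap01 {f : ℝ → ℝ → ℝ} (hf : Continuous (Function.uncurry f)) :
    ∫ s in (0:ℝ)..1, ∫ r in (0:ℝ)..1, f s r = ∫ r in (0:ℝ)..1, ∫ s in (0:ℝ)..1, f s r := by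
  have h01 : (0:ℝ) ≤ 1 := by norm_num
  simp_rw [intervalIntegral.integral_of_le h01]
  have hint : Integrable (Function.uncurry f)
      ((volume.restrict (Ioc (0:ℝ) 1)).prod (volume.restrict (Ioc (0:ℝ) 1))) := by
    rw [Measure.prod_restrict]
    exact (hf.continuousOn.integrableOn_compact (isCompact_Icc.prod isCompact_Icc)).mono_set
      (prod_mono Ioc_subset_Icc_self Ioc_subset_Icc_self)
  exact MeasureTheory.integral_integral_swap hint

-- partial deriv identity and continuity
lemma pd_eq {f : ℝ → ℝ → ℝ} (hf : ContDiff ℝ 2 (Function.uncurry f)) (s r : ℝ) :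
    HasDerivAt (fun x => f x r) (fderiv ℝ (Function.uncurry f) (s, r) (1, 0)) s := by
  have hF : HasFDerivAt (Function.uncurry f) (fderiv ℝ (Function.uncurry f) (s, r)) (s, r) :=
    (hf.differentiable (by norm_num) _).hasFDerivAt
  have hφ : HasDerivAt (fun x : ℝ => (x, r)) ((1:ℝ), (0:ℝ)) s :=
    HasDerivAt.prodMk (hasDerivAt_id s) (hasDerivAt_const s r)
  exact hF.comp_hasDerivAt s hφ

lemma pd_cont {f : ℝ → ℝ → ℝ} (hf : ContDiff ℝ 2 (Function.uncurry f)) :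
    Continuous (fun p : ℝ × ℝ => deriv (fun x => f x p.2) p.1) := by
  have : (fun p : ℝ × ℝ => deriv (fun x => f x p.2) p.1)
      = fun p : ℝ × ℝ => fderiv ℝ (Function.uncurry f) p ((1:ℝ), (0:ℝ)) := by
    funext p
    exact (pd_eq hf p.1 p.2).deriv
  rw [this]
  exact (hf.continuous_fderiv (by norm_num)).clm_apply continuous_const

lemma pd_contdiff {f : ℝ → ℝ → ℝ} (hf : ContDiff ℝ 2 (Function.uncurry f)) (r : ℝ) :
    ContDiff ℝ 2 (fun x => f x r) :=
  hf.comp (contDiff_id.prodMk contDiff_const)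

/-- Energy estimate for the first (parallel-direction, IMEX) step of the
directional splitting scheme for the 2D nonlinear heat equation on
`Ω = (0,1) × (0,1)`, with limiter boundary conditions for `r ∈ (1/2,1)`
and periodicity in `s` for `r ∈ (0,1/2)`.  `Tn s r` and `Ts s r` denote
`T^n(s,r)` and `T^⋆(s,r)`. -/
theorem imex_parallel_step_energy_2D
    (K γ Δt ν : ℝ) (hK : 0 < K) (hγ : 0 ≤ γ) (hΔt : 0 < Δt) (hν : 0 < ν)
    (Tn Ts : ℝ → ℝ → ℝ)
    (hTn : ContDiff ℝ 2 (Function.uncurry Tn))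
    (hTs : ContDiff ℝ 2 (Function.uncurry Ts))
    (hTnpos : ∀ s ∈ Icc (0:ℝ) 1, ∀ r ∈ Icc (0:ℝ) 1, 0 ≤ Tn s r)
    (hpde : ∀ s ∈ Ioo (0:ℝ) 1, ∀ r ∈ Ioo (0:ℝ) 1,
      (Ts s r - Tn s r) / Δt
        - deriv (fun x => (K * (Tn x r) ^ ((5:ℝ)/2) - ν)
            * deriv (fun y => Tn y r) x) s
        - ν * deriv (deriv (fun x => Ts x r)) s = 0)
    (hbc0 : ∀ r ∈ Ioo (1/2:ℝ) 1,
      (K * (Tn 0 r) ^ ((5:ℝ)/2) - ν) * deriv (fun x => Tn x r) 0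
        = γ * Ts 0 r - ν * deriv (fun x => Ts x r) 0)
    (hbc1 : ∀ r ∈ Ioo (1/2:ℝ) 1,
      (K * (Tn 1 r) ^ ((5:ℝ)/2) - ν) * deriv (fun x => Tn x r) 1
        = -(γ * Ts 1 r) - ν * deriv (fun x => Ts x r) 1)
    (hper : ∀ r ∈ Ioo (0:ℝ) (1/2),
      Tn 0 r = Tn 1 r
      ∧ deriv (fun x => Tn x r) 0 = deriv (fun x => Tn x r) 1
      ∧ Ts 0 r = Ts 1 r
      ∧ deriv (fun x => Ts x r) 0 = deriv (fun x => Ts x r) 1)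
    (hsup : K * (sSup (Function.uncurry Tn ''
        (Icc (0:ℝ) 1 ×ˢ Icc (0:ℝ) 1))) ^ ((5:ℝ)/2) ≤ ν) :
    (1/2) * (∫ s in (0:ℝ)..1, ∫ r in (0:ℝ)..1, (Ts s r)^2)
      + (ν * Δt / 2) * (∫ s in (0:ℝ)..1, ∫ r in (0:ℝ)..1,
          (deriv (fun x => Ts x r) s)^2)
    ≤ (1/2) * (∫ s in (0:ℝ)..1, ∫ r in (0:ℝ)..1, (Tn s r)^2)
      + (ν * Δt / 2) * (∫ s in (0:ℝ)..1, ∫ r in (0:ℝ)..1,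
          (deriv (fun x => Tn x r) s)^2) := by
  have hDTs : Continuous (fun p : ℝ × ℝ => deriv (fun x => Ts x p.2) p.1) := pd_cont hTs
  have hDTn : Continuous (fun p : ℝ × ℝ => deriv (fun x => Tn x p.2) p.1) := pd_cont hTn
  -- swap the order of integration in all four double integrals
  rw [swap01 (f := fun s r => (Ts s r)^2) (by exact hTs.continuous.pow 2),
      swap01 (f := fun s r => (Tn s r)^2) (by exact hTn.continuous.pow 2),
      swap01 (f := fun s r => (deriv (fun x => Ts x r) s)^2) (by exact hDTs.pow 2),
      swap01 (f := fun s r => (deriv (fun x => Tn x r) s)^2) (by exact hDTn.pow 2)]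
  -- continuity in r of the four inner integrals
  have hAv : Continuous (fun r => ∫ s in (0:ℝ)..1, (Ts s r)^2) :=
    continuous_parametric_intervalIntegral_of_continuous' (μ := volume)
      (by exact (hTs.continuous.comp continuous_swap).pow 2) 0 1
  have hAu : Continuous (fun r => ∫ s in (0:ℝ)..1, (Tn s r)^2) :=
    continuous_parametric_intervalIntegral_of_continuous' (μ := volume)
      (by exact (hTn.continuous.comp continuous_swap).pow 2) 0 1
  have hBv : Continuous (fun r => ∫ s in (0:ℝ)..1, (deriv (fun x => Ts x r) s)^2) :=
    continuous_parametric_intervalIntegral_of_continuous' (μ := volume)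
      (by exact (hDTs.comp continuous_swap).pow 2) 0 1
  have hBu : Continuous (fun r => ∫ s in (0:ℝ)..1, (deriv (fun x => Tn x r) s)^2) :=
    continuous_parametric_intervalIntegral_of_continuous' (μ := volume)
      (by exact (hDTn.comp continuous_swap).pow 2) 0 1
  -- combine the outer integrals into one
  rw [← intervalIntegral.integral_const_mul, ← intervalIntegral.integral_const_mul,
      ← intervalIntegral.integral_const_mul, ← intervalIntegral.integral_const_mul,
      ← intervalIntegral.integral_add (f := fun r => 1/2 * ∫ s in (0:ℝ)..1, (Ts s r)^2)
        (g := fun r => ν * Δt / 2 * ∫ s in (0:ℝ)..1, (deriv (fun x => Ts x r) s)^2)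
        ((continuous_const.mul hAv).intervalIntegrable 0 1)
        ((continuous_const.mul hBv).intervalIntegrable 0 1),
      ← intervalIntegral.integral_add (f := fun r => 1/2 * ∫ s in (0:ℝ)..1, (Tn s r)^2)
        (g := fun r => ν * Δt / 2 * ∫ s in (0:ℝ)..1, (deriv (fun x => Tn x r) s)^2)
        ((continuous_const.mul hAu).intervalIntegrable 0 1)
        ((continuous_const.mul hBu).intervalIntegrable 0 1)]
  -- the pointwise (in r) energy estimate
  have key : ∀ r ∈ Ioo (0:ℝ) 1, r ≠ 1/2 →
      (1/2) * (∫ s in (0:ℝ)..1, (Ts s r)^2)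
        + (ν * Δt / 2) * (∫ s in (0:ℝ)..1, (deriv (fun x => Ts x r) s)^2)
      ≤ (1/2) * (∫ s in (0:ℝ)..1, (Tn s r)^2)
        + (ν * Δt / 2) * (∫ s in (0:ℝ)..1, (deriv (fun x => Tn x r) s)^2) := by
    intro r hr hr2
    have hrIcc : r ∈ Icc (0:ℝ) 1 := Ioo_subset_Icc_self hr
    apply key_1d K γ Δt ν hK hγ hΔt hν (fun x => Tn x r) (fun x => Ts x r)
      (pd_contdiff hTn r) (pd_contdiff hTs r)
    · intro s hs
      refine ⟨hTnpos s hs r hrIcc, ?_⟩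
      have hbdd : BddAbove (Function.uncurry Tn '' (Icc (0:ℝ) 1 ×ˢ Icc (0:ℝ) 1)) :=
        ((isCompact_Icc.prod isCompact_Icc).image hTn.continuous).bddAbove
      have hmem : Tn s r ∈ Function.uncurry Tn '' (Icc (0:ℝ) 1 ×ˢ Icc (0:ℝ) 1) :=
        ⟨(s, r), mk_mem_prod hs hrIcc, rfl⟩
      have hle : Tn s r ≤ sSup (Function.uncurry Tn '' (Icc (0:ℝ) 1 ×ˢ Icc (0:ℝ) 1)) :=
        le_csSup hbdd hmem
      have h52 : (Tn s r) ^ ((5:ℝ)/2)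
          ≤ (sSup (Function.uncurry Tn '' (Icc (0:ℝ) 1 ×ˢ Icc (0:ℝ) 1))) ^ ((5:ℝ)/2) :=
        Real.rpow_le_rpow (hTnpos s hs r hrIcc) hle (by norm_num)
      calc K * (Tn s r) ^ ((5:ℝ)/2)
          ≤ K * (sSup (Function.uncurry Tn '' (Icc (0:ℝ) 1 ×ˢ Icc (0:ℝ) 1))) ^ ((5:ℝ)/2) :=
            mul_le_mul_of_nonneg_left h52 hK.le
        _ ≤ ν := hsup
    · intro s hs
      exact hpde s hs r hr
    · rcases lt_or_gt_of_ne hr2 with hlt | hgt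
      · exact Or.inr (hper r ⟨hr.1, hlt⟩)
      · exact Or.inl ⟨hbc0 r ⟨hgt, hr.2⟩, hbc1 r ⟨hgt, hr.2⟩⟩
  -- upgrade to an a.e. inequality on [0,1] and integrate
  have hnull : (volume : Measure ℝ) {(0:ℝ), 1, 1/2} = 0 :=
    (Set.Finite.insert _ (Set.Finite.insert _ (Set.finite_singleton _))).measure_zero volume
  have hae : (fun r => (1/2) * (∫ s in (0:ℝ)..1, (Ts s r)^2)
        + (ν * Δt / 2) * (∫ s in (0:ℝ)..1, (deriv (fun x => Ts x r) s)^2))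
      ≤ᵐ[volume.restrict (Icc (0:ℝ) 1)]
      (fun r => (1/2) * (∫ s in (0:ℝ)..1, (Tn s r)^2)
        + (ν * Δt / 2) * (∫ s in (0:ℝ)..1, (deriv (fun x => Tn x r) s)^2)) := by
    have h1 : ∀ᵐ r ∂volume.restrict (Icc (0:ℝ) 1), r ∈ Icc (0:ℝ) 1 :=
      ae_restrict_mem measurableSet_Icc
    have h2 : ∀ᵐ r ∂volume.restrict (Icc (0:ℝ) 1), r ∉ ({(0:ℝ), 1, 1/2} : Set ℝ) :=
      ae_restrict_of_ae (measure_eq_zero_iff_ae_notMem.mp hnull)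
    filter_upwards [h1, h2] with r hr1 hr2
    simp only [Set.mem_insert_iff, Set.mem_singleton_iff, not_or] at hr2
    exact key r ⟨lt_of_le_of_ne hr1.1 (Ne.symm hr2.1), lt_of_le_of_ne hr1.2 hr2.2.1⟩ hr2.2.2
  exact intervalIntegral.integral_mono_ae_restrict (by norm_num : (0:ℝ) ≤ 1)
    (((continuous_const.mul hAv).add (continuous_const.mul hBv)).intervalIntegrable 0 1)
    (((continuous_const.mul hAu).add (continuous_const.mul hBu)).intervalIntegrable 0 1) hae
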